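/- Let m ≥ 1 be an integer, s ≥ 1 a real number, and f : ℝ^m → ℂ a continuous function satisfying: (rapid decay) for every N ∈ ℕ there exists C_N > 0 with |f(ξ)| ≤ C_N (1 + ‖ξ‖)^{−N} for all ξ ∈ ℝ^m; and (failure of Gevrey-s decay) for every real M > 1 there exist N ∈ ℕ and ξ ∈ ℝ^m ∖ {0} with |f(ξ)| > M^{N+1} (N!)^s ‖ξ‖^{−N}. Then there exists a sequence (b_k)_{k ∈ ℕ} of nonnegative real numbers such that: (i) for every ε > 0 there exists C_ε > 0 with b_k ≤ C_ε ε^k/(k!)^s for all k ∈ ℕ; and (ii) for every N₀ ∈ ℕ and every C > 0 there exists ξ ∈ ℝ^m with (Σ_{k=0}^∞ b_k ‖ξ‖^k) · |f(ξ)| > C (1 + ‖ξ‖)^{N₀}. -/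

import Mathlib

open scoped BigOperators

open Filter

lemma aux_little (c : ℝ) (d a : ℕ) : ∃ T : ℕ, ∀ n, T ≤ n → c * ((n : ℝ) + d) ^ a < 2 ^ n := by
  have hlo := isLittleO_pow_const_const_pow_of_one_lt (R := ℝ) a (by norm_num : (1:ℝ) < 2)
  set c' : ℝ := (|c| + 1) * ((1 : ℝ) + d) ^ a with hc'
  have hc'pos : 0 < c' := by positivity
  have hev := hlo.def (show (0:ℝ) < (2 * c')⁻¹ by positivity)
  rw [Filter.eventually_atTop] at hev
  obtain ⟨T, hT⟩ := hev
  refine ⟨max T 1, fun n hn => ?_⟩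
  have hn1 : 1 ≤ n := le_trans (le_max_right _ _) hn
  have h1 := hT n (le_trans (le_max_left _ _) hn)
  have h2 : ((n:ℝ)) ^ a ≤ (2 * c')⁻¹ * 2 ^ n := by
    simp only [Real.norm_eq_abs] at h1
    rwa [abs_of_nonneg (by positivity), abs_of_nonneg (by positivity)] at h1
  have h3 : ((n:ℝ) + d) ^ a ≤ ((1:ℝ) + d) ^ a * (n:ℝ) ^ a := by
    rw [← mul_pow]
    apply pow_le_pow_left₀ (by positivity)
    have hn1' : (1:ℝ) ≤ (n:ℝ) := by exact_mod_cast hn1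
    nlinarith [Nat.cast_nonneg (α := ℝ) d]
  have hpos : (0:ℝ) < 2 ^ n := by positivity
  calc c * ((n : ℝ) + d) ^ a ≤ |c| * ((n:ℝ)+d)^a :=
        mul_le_mul_of_nonneg_right (le_abs_self c) (by positivity)
    _ ≤ (|c|+1) * (((1:ℝ)+d)^a * (n:ℝ)^a) :=
        mul_le_mul (by linarith [abs_nonneg c]) h3 (by positivity) (by positivity)
    _ = c' * (n:ℝ)^a := by ring
    _ ≤ c' * ((2*c')⁻¹ * 2^n) := mul_le_mul_of_nonneg_left h2 hc'pos.le
    _ = 2^n / 2 := by field_simp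
    _ < 2^n := by linarith

lemma aux_fact (K L : ℕ) : Nat.factorial (K + L) ≤ (K + L) ^ L * Nat.factorial K := by
  induction L with
  | zero => simp
  | succ L ih =>
    have h1 : (K + (L+1)).factorial = (K + L + 1) * (K + L).factorial := by
      rw [show K + (L+1) = (K+L) + 1 by omega, Nat.factorial_succ]
    rw [h1]
    calc (K + L + 1) * (K + L).factorial ≤ (K + L + 1) * ((K + L) ^ L * K.factorial) :=
          Nat.mul_le_mul_left _ ih
      _ ≤ (K + (L+1)) ^ (L+1) * K.factorial := by
          rw [pow_succ]
          have hle : (K+L)^L ≤ (K+(L+1))^L := Nat.pow_le_pow_left (by omega) L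
          calc (K + L + 1) * ((K + L) ^ L * K.factorial)
              = (K+L)^L * K.factorial * (K+L+1) := by ring
            _ ≤ (K+(L+1))^L * K.factorial * (K+(L+1)) := by
                have h2 : K+L+1 ≤ K+(L+1) := by omega
                exact Nat.mul_le_mul (Nat.mul_le_mul_right _ hle) h2
            _ = (K + (L+1)) ^ L * (K + (L+1)) * K.factorial := by ring


set_option maxHeartbeats 2000000 in
/-- Given a continuous, rapidly decreasing `f` whose decay fails the Gevrey-`s` rate,
there is a nonnegative sequence `(b_k)` with `{p!^s}`-type bounds such that
`(Σ_k b_k ‖ξ‖^k)·|f(ξ)|` is not bounded by any polynomial. -/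
theorem exists_symbol_coefficients (m : ℕ) (hm : 1 ≤ m) (s : ℝ) (hs : 1 ≤ s)
    (f : EuclideanSpace ℝ (Fin m) → ℂ) (hf : Continuous f)
    (hdecay : ∀ N : ℕ, ∃ C : ℝ, 0 < C ∧ ∀ ξ : EuclideanSpace ℝ (Fin m),
      ‖f ξ‖ ≤ C * (1 + ‖ξ‖) ^ (-(N : ℝ)))
    (hnotGevrey : ∀ M : ℝ, 1 < M → ∃ N : ℕ, ∃ ξ : EuclideanSpace ℝ (Fin m), ξ ≠ 0 ∧
      M ^ (N + 1) * ((Nat.factorial N : ℝ)) ^ s * ‖ξ‖ ^ (-(N : ℝ)) < ‖f ξ‖) :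
    ∃ b : ℕ → ℝ, (∀ k, 0 ≤ b k) ∧
      (∀ ε : ℝ, 0 < ε → ∃ C : ℝ, 0 < C ∧ ∀ k : ℕ,
        b k ≤ C * ε ^ k / ((Nat.factorial k : ℝ)) ^ s) ∧
      (∀ N₀ : ℕ, ∀ C : ℝ, 0 < C → ∃ ξ : EuclideanSpace ℝ (Fin m),
        C * (1 + ‖ξ‖) ^ N₀ < (∑' k : ℕ, b k * ‖ξ‖ ^ k) * ‖f ξ‖) := by
  classical
  have hs0 : 0 ≤ s := by linarith
  obtain ⟨Cd, hCd⟩ := Classical.axiomOfChoice hdecay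
  have hfactge1 : ∀ n : ℕ, (1:ℝ) ≤ ((Nat.factorial n : ℝ)) ^ s := by
    intro n
    have h1 : (1:ℝ) ≤ (Nat.factorial n : ℝ) := by exact_mod_cast Nat.factorial_pos n
    calc (1:ℝ) = 1 ^ s := (Real.one_rpow s).symm
      _ ≤ _ := Real.rpow_le_rpow zero_le_one h1 hs0
  -- ### Step 1: for large M, every Gevrey-failure witness has large N
  have lemA : ∀ B : ℕ, ∃ M₀ : ℝ, ∀ M : ℝ, M₀ < M → 1 < M →
      ∀ (N : ℕ) (ξ : EuclideanSpace ℝ (Fin m)), ξ ≠ 0 →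
      M ^ (N + 1) * ((Nat.factorial N : ℝ)) ^ s * ‖ξ‖ ^ (-(N : ℝ)) < ‖f ξ‖ → B < N := by
    intro B
    refine ⟨∑ i ∈ Finset.range (B+1), Cd (i+1), fun M hM0 hM1 N ξ hξ hlt => ?_⟩
    by_contra hBN
    push_neg at hBN
    have hr : 0 < ‖ξ‖ := norm_pos_iff.mpr hξ
    set r := ‖ξ‖ with hrdef
    have hfb : ‖f ξ‖ ≤ Cd (N+1) * ((1 + r) ^ (N+1))⁻¹ := by
      have h := (hCd (N+1)).2 ξ
      rwa [Real.rpow_neg (by positivity), Real.rpow_natCast] at h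
    have hlt' : M ^ (N + 1) * ((Nat.factorial N : ℝ)) ^ s * (r ^ N)⁻¹ <
        Cd (N+1) * ((1 + r) ^ (N+1))⁻¹ := by
      rw [← Real.rpow_natCast r N, ← Real.rpow_neg hr.le]
      exact lt_of_lt_of_le hlt hfb
    set A := M ^ (N + 1) * ((Nat.factorial N : ℝ)) ^ s with hA
    have hfact1 : (1:ℝ) ≤ ((Nat.factorial N : ℝ)) ^ s := hfactge1 N
    have hMA : M ≤ A := by
      calc M = M * 1 := (mul_one M).symm
        _ ≤ M ^ (N+1) * ((Nat.factorial N : ℝ)) ^ s := by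
            apply mul_le_mul (le_self_pow₀ (by linarith) (Nat.succ_ne_zero N)) hfact1
              zero_le_one (by positivity)
    have h1 : A * (1 + r) ^ (N+1) < Cd (N+1) * r ^ N := by
      have hD1 : (0:ℝ) < r ^ N := by positivity
      have hD2 : (0:ℝ) < (1+r) ^ (N+1) := by positivity
      rw [← div_eq_mul_inv, ← div_eq_mul_inv, div_lt_div_iff₀ hD1 hD2] at hlt'
      linarith
    have hpow : (0:ℝ) < (1+r)^N := by positivity
    have hA1r : M * (1+r)^N ≤ A * (1+r)^(N+1) := by
      rw [pow_succ]
      calc M * (1+r)^N ≤ A * (1+r)^N := mul_le_mul_of_nonneg_right hMA hpow.le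
        _ ≤ A * (1+r)^N * (1+r) := le_mul_of_one_le_right (by positivity) (by linarith)
        _ = A * ((1+r)^N * (1+r)) := mul_assoc _ _ _
    have hCdr : Cd (N+1) * r^N ≤ Cd (N+1) * (1+r)^N :=
      mul_le_mul_of_nonneg_left (pow_le_pow_left₀ hr.le (by linarith) N) (hCd (N+1)).1.le
    have hMCd : M < Cd (N+1) := by
      have := lt_of_le_of_lt hA1r (lt_of_lt_of_le h1 hCdr)
      exact lt_of_mul_lt_mul_right this hpow.le
    have hle : Cd (N+1) ≤ ∑ i ∈ Finset.range (B+1), Cd (i+1) :=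
      Finset.single_le_sum (f := fun i => Cd (i+1)) (fun i _ => (hCd (i+1)).1.le)
        (Finset.mem_range.mpr (by omega))
    linarith
  -- ### Step 2: witnesses with base t² and N as large as we like
  have lemB : ∀ B t : ℕ, ∃ (N : ℕ) (ξ : EuclideanSpace ℝ (Fin m)), ξ ≠ 0 ∧ B < N ∧ t < N ∧
      ((t : ℝ)) ^ (2 * (N + 1)) * ((Nat.factorial N : ℝ)) ^ s * ‖ξ‖ ^ (-(N : ℝ)) < ‖f ξ‖ := by
    intro B t
    obtain ⟨M₀, hA⟩ := lemA (max B t)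
    set M : ℝ := max M₀ ((t:ℝ)^2) + 2 with hMdef
    have ht2 : (0:ℝ) ≤ (t:ℝ)^2 := by positivity
    have hmax2 : (t:ℝ)^2 ≤ max M₀ ((t:ℝ)^2) := le_max_right _ _
    have hM1 : 1 < M := by
      have := le_max_right M₀ ((t:ℝ)^2); simp only [hMdef]; nlinarith
    obtain ⟨N, ξ, hξ, hw⟩ := hnotGevrey M hM1
    have hBN : max B t < N :=
      hA M (by have := le_max_left M₀ ((t:ℝ)^2); simp only [hMdef]; linarith) hM1 N ξ hξ hw
    have ht2M : ((t:ℝ)^2) ≤ M := by simp only [hMdef]; linarith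
    refine ⟨N, ξ, hξ, (le_max_left B t).trans_lt hBN, (le_max_right B t).trans_lt hBN, ?_⟩
    calc (t:ℝ)^(2*(N+1)) * ((Nat.factorial N : ℝ))^s * ‖ξ‖^(-(N:ℝ))
        = ((t:ℝ)^2)^(N+1) * ((Nat.factorial N : ℝ))^s * ‖ξ‖^(-(N:ℝ)) := by rw [pow_mul]
      _ ≤ M^(N+1) * ((Nat.factorial N : ℝ))^s * ‖ξ‖^(-(N:ℝ)) := by
          have h1 : ((t:ℝ)^2)^(N+1) ≤ M^(N+1) := pow_le_pow_left₀ ht2 ht2M (N+1)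
          have h2 : (0:ℝ) ≤ ((Nat.factorial N : ℝ))^s := by positivity
          have h3 : (0:ℝ) ≤ ‖ξ‖^(-(N:ℝ)) := Real.rpow_nonneg (norm_nonneg ξ) _
          exact mul_le_mul_of_nonneg_right (mul_le_mul_of_nonneg_right h1 h2) h3
      _ < ‖f ξ‖ := hw
  -- ### Step 3: recursive choice of witnesses
  choose Nw ξw hw1 hw2 hw3 hw4 using lemB
  obtain ⟨kfun, xif, hk0, hx0, hks, hxs⟩ :
      ∃ (kfun : ℕ → ℕ) (xif : ℕ → EuclideanSpace ℝ (Fin m)),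
        kfun 0 = Nw 0 0 ∧ xif 0 = ξw 0 0 ∧ (∀ t, kfun (t + 1) = Nw (kfun t) (t + 1)) ∧
        (∀ t, xif (t + 1) = ξw (kfun t) (t + 1)) := by
    refine ⟨fun t => Nat.rec (Nw 0 0) (fun t ih => Nw ih (t + 1)) t,
      fun t => Nat.rec (ξw 0 0)
        (fun t _ => ξw (Nat.rec (Nw 0 0) (fun t ih => Nw ih (t + 1)) t) (t + 1)) t,
      rfl, rfl, fun t => rfl, fun t => rfl⟩
  have hmono : StrictMono kfun := strictMono_nat_of_lt_succ (fun t => by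
    rw [hks]; exact hw2 _ _)
  have hlt : ∀ t, t < kfun t := by
    intro t
    cases t with
    | zero => rw [hk0]; exact hw3 0 0
    | succ t => rw [hks]; exact hw3 _ _
  have hxne : ∀ t, xif t ≠ 0 := by
    intro t
    cases t with
    | zero => rw [hx0]; exact hw1 0 0
    | succ t => rw [hxs]; exact hw1 _ _
  have hdec : ∀ t : ℕ, ((t:ℝ)) ^ (2 * (kfun t + 1)) * ((Nat.factorial (kfun t) : ℝ)) ^ s *
      ‖xif t‖ ^ (-((kfun t : ℕ) : ℝ)) < ‖f (xif t)‖ := by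
    intro t
    cases t with
    | zero => rw [hk0, hx0]; exact hw4 0 0
    | succ t => rw [hks, hxs]; exact hw4 (kfun t) (t+1)
  have hadd : ∀ t a : ℕ, kfun t + a ≤ kfun (t + a) := by
    intro t a
    induction a with
    | zero => simp
    | succ a ih =>
      have h1 : kfun (t + a) < kfun (t + a + 1) := hmono (by omega)
      have h2 : t + (a + 1) = t + a + 1 := by omega
      rw [h2]; omega
  -- ### Step 4: the weight sequence m and the coefficients b
  obtain ⟨mfun, hmdef⟩ : ∃ mf : ℕ → ℕ,
      ∀ i, mf i = 2 + ((Finset.range i).filter (fun t => kfun t < i)).card :=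
    ⟨_, fun i => rfl⟩
  have hm2 : ∀ i, 2 ≤ mfun i := fun i => by rw [hmdef]; omega
  have hmub1 : ∀ t i, i ≤ kfun t → mfun i ≤ t + 2 := by
    intro t i hi
    have hsub : (Finset.range i).filter (fun u => kfun u < i) ⊆ Finset.range t := by
      intro x hx
      simp only [Finset.mem_filter, Finset.mem_range] at hx ⊢
      have : kfun x < kfun t := lt_of_lt_of_le hx.2 hi
      exact hmono.lt_iff_lt.mp this
    have := Finset.card_le_card hsub
    simp only [Finset.card_range] at this
    rw [hmdef]; omega
  have hmub2 : ∀ t L i, i ≤ kfun t + L → mfun i ≤ t + L + 2 := by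
    intro t L i hi
    have hsub : (Finset.range i).filter (fun u => kfun u < i) ⊆ Finset.range (t + L) := by
      intro x hx
      simp only [Finset.mem_filter, Finset.mem_range] at hx ⊢
      by_contra hxc
      push_neg at hxc
      have h1 : kfun t + (x - t) ≤ kfun x := by
        have := hadd t (x - t)
        rwa [show t + (x - t) = x by omega] at this
      have h2 : kfun x < kfun t + L := lt_of_lt_of_le hx.2 hi
      omega
    have := Finset.card_le_card hsub
    simp only [Finset.card_range] at this
    rw [hmdef]; omega
  have hmlb : ∀ A i, kfun A < i → A ≤ mfun i := by
    intro A i hi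
    have hsub : Finset.range (A + 1) ⊆ (Finset.range i).filter (fun u => kfun u < i) := by
      intro x hx
      simp only [Finset.mem_range] at hx
      have hx1 : kfun x ≤ kfun A := hmono.le_iff_le.mpr (by omega)
      simp only [Finset.mem_filter, Finset.mem_range]
      have := hlt x
      constructor <;> omega
    have := Finset.card_le_card hsub
    simp only [Finset.card_range] at this
    rw [hmdef]; omega
  obtain ⟨Pf, hPdef⟩ : ∃ P : ℕ → ℝ,
      ∀ k, P k = ∏ i ∈ Finset.range k, (mfun (i + 1) : ℝ) := ⟨_, fun k => rfl⟩
  have hPpos : ∀ k, 0 < Pf k := by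
    intro k
    rw [hPdef]
    apply Finset.prod_pos
    intro i _
    have := hm2 (i+1)
    positivity
  have hP2 : ∀ k, (2:ℝ)^k ≤ Pf k := by
    intro k
    calc (2:ℝ)^k = ∏ _i ∈ Finset.range k, (2:ℝ) := by
          rw [Finset.prod_const, Finset.card_range]
      _ ≤ Pf k := by
          rw [hPdef]
          apply Finset.prod_le_prod (fun i _ => by norm_num)
          intro i _
          exact_mod_cast hm2 (i+1)
  have hP1 : ∀ k, 1 ≤ Pf k := by
    intro k
    refine le_trans ?_ (hP2 k)
    calc (1:ℝ) = 1 ^ k := (one_pow k).symm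
      _ ≤ 2 ^ k := pow_le_pow_left₀ zero_le_one one_le_two k
  have hPsucc : ∀ k, Pf (k+1) = Pf k * (mfun (k+1) : ℝ) := by
    intro k
    rw [hPdef, hPdef, Finset.prod_range_succ]
  set b : ℕ → ℝ := fun k => 1 / ((Nat.factorial k : ℝ) ^ s * Pf k) with hbdef
  have hbpos : ∀ k, 0 < b k := by
    intro k
    have h1 := hfactge1 k
    have h2 := hPpos k
    simp only [hbdef]
    positivity
  refine ⟨b, fun k => (hbpos k).le, ?_, ?_⟩
  · -- ### Part (i)
    intro ε hε
    set A := Nat.ceil (ε⁻¹) with hA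
    set i₀ := kfun A + 1 with hi₀
    have hmge : ∀ i, i₀ ≤ i → ε⁻¹ ≤ (mfun i : ℝ) := by
      intro i hi
      have h1 : A ≤ mfun i := hmlb A i (by omega)
      calc ε⁻¹ ≤ (A:ℝ) := Nat.le_ceil _
        _ ≤ _ := by exact_mod_cast h1
    set Cε := (max ε⁻¹ 1) ^ i₀ with hCε
    have hCεpos : 0 < Cε := by positivity
    have hCε1 : 1 ≤ Cε := by
      calc (1:ℝ) = 1 ^ i₀ := (one_pow i₀).symm
        _ ≤ Cε := pow_le_pow_left₀ zero_le_one (le_max_right _ _) i₀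
    have key : ∀ k, ε⁻¹ ^ k ≤ Cε * Pf k := by
      intro k
      induction k with
      | zero =>
        have hPf0 : Pf 0 = 1 := by rw [hPdef]; simp
        simpa [hPf0] using hCε1
      | succ k ih =>
        rcases le_or_gt i₀ (k+1) with hcase | hcase
        · rw [pow_succ, hPsucc _, ← mul_assoc]
          apply mul_le_mul ih (hmge _ hcase) (by positivity)
          exact le_trans hCεpos.le (le_trans (le_mul_of_one_le_right hCεpos.le (hP1 k)) le_rfl)
        · calc ε⁻¹ ^ (k+1) ≤ (max ε⁻¹ 1) ^ (k+1) :=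
              pow_le_pow_left₀ (by positivity) (le_max_left _ _) _
            _ ≤ (max ε⁻¹ 1) ^ i₀ := pow_le_pow_right₀ (le_max_right _ _) (by omega)
            _ = Cε * 1 := (mul_one Cε).symm
            _ ≤ Cε * Pf (k+1) := by
                apply mul_le_mul_of_nonneg_left (hP1 _) hCεpos.le
    refine ⟨Cε, hCεpos, fun k => ?_⟩
    have h1 : 1 / Pf k ≤ Cε * ε ^ k := by
      rw [div_le_iff₀ (hPpos k)]
      have h2 := mul_le_mul_of_nonneg_right (key k) (le_of_lt (pow_pos hε k))
      have h3 : ε⁻¹ ^ k * ε ^ k = 1 := by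
        rw [← mul_pow, inv_mul_cancel₀ (ne_of_gt hε), one_pow]
      calc (1:ℝ) = ε⁻¹ ^ k * ε ^ k := h3.symm
        _ ≤ Cε * Pf k * ε ^ k := h2
        _ = Cε * ε ^ k * Pf k := by ring
    have heq : b k = (1 / Pf k) / ((Nat.factorial k : ℝ) ^ s) := by
      simp only [hbdef]
      rw [div_div]
      ring_nf
    rw [heq]
    have hfs : (0:ℝ) < (Nat.factorial k : ℝ) ^ s := by
      have := hfactge1 k; linarith
    exact (div_le_div_iff_of_pos_right hfs).mpr h1
  · -- ### Part (ii)
    intro N₀ C hC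
    obtain ⟨T₁, hT₁⟩ := aux_little 1 (N₀ + 1) ((N₀ + 1) * Nat.ceil s)
    obtain ⟨T₂, hT₂⟩ := aux_little (C * 2 ^ N₀) (N₀ + 1 + 2) (N₀ + 1)
    set L := N₀ + 1 with hLdef
    obtain ⟨S, hSdef⟩ : ∃ S : ℕ, S = Nat.ceil s := ⟨_, rfl⟩
    obtain ⟨t, ht6, htT₁, htT₂, htC⟩ :
        ∃ t : ℕ, 6 ≤ t ∧ T₁ ≤ t ∧ T₂ ≤ t ∧ C * 2 ^ N₀ < (t:ℝ) := by
      refine ⟨max (max T₁ T₂) (max 6 (Nat.ceil (C * 2 ^ N₀) + 1)),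
        le_trans (le_max_left 6 _) (le_max_right _ _),
        le_trans (le_max_left _ _) (le_max_left _ _),
        le_trans (le_max_right _ _) (le_max_left _ _), ?_⟩
      have h1 : Nat.ceil (C * 2 ^ N₀) + 1 ≤ max (max T₁ T₂) (max 6 (Nat.ceil (C * 2 ^ N₀) + 1)) :=
        le_trans (le_max_right 6 _) (le_max_right _ _)
      have h2 : (C * 2 ^ N₀) ≤ (Nat.ceil (C * 2 ^ N₀) : ℝ) := Nat.le_ceil _
      have h3 : ((Nat.ceil (C * 2 ^ N₀) : ℕ) : ℝ) + 1 ≤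
          ((max (max T₁ T₂) (max 6 (Nat.ceil (C * 2 ^ N₀) + 1)) : ℕ) : ℝ) := by exact_mod_cast h1
      linarith
    set K := kfun t with hKdef
    set ξ := xif t with hξdef
    refine ⟨ξ, ?_⟩
    set r := ‖ξ‖ with hrdef
    have hrpos : 0 < r := norm_pos_iff.mpr (hxne t)
    have htK : t < K := hlt t
    have ht6R : (6:ℝ) ≤ (t:ℝ) := by exact_mod_cast ht6
    have hdect : ((t:ℝ)) ^ (2 * (K + 1)) * ((Nat.factorial K : ℝ)) ^ s * (r ^ K)⁻¹ < ‖f ξ‖ := by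
      rw [← Real.rpow_natCast r K, ← Real.rpow_neg hrpos.le]
      exact hdec t
    have hfKs : (1:ℝ) ≤ ((Nat.factorial K : ℝ)) ^ s := hfactge1 K
    have hfpos : 0 < ‖f ξ‖ := by
      refine lt_trans ?_ hdect
      have h0 : (0:ℝ) < (t:ℝ) := by linarith
      positivity
    -- summability of the series
    have hble : ∀ k, b k * r ^ k ≤ (r/2) ^ k / (Nat.factorial k : ℝ) := by
      intro k
      have hfk : (1:ℝ) ≤ (Nat.factorial k : ℝ) := by exact_mod_cast Nat.factorial_pos k
      have h1 : (Nat.factorial k : ℝ) * 2 ^ k ≤ (Nat.factorial k : ℝ) ^ s * Pf k := by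
        apply mul_le_mul ?_ (hP2 k) (by positivity) (by positivity)
        calc (Nat.factorial k : ℝ) = (Nat.factorial k : ℝ) ^ (1:ℝ) := (Real.rpow_one _).symm
          _ ≤ (Nat.factorial k : ℝ) ^ s := Real.rpow_le_rpow_of_exponent_le hfk hs
      have h2 : b k ≤ 1 / ((Nat.factorial k : ℝ) * 2 ^ k) := by
        simp only [hbdef]
        apply one_div_le_one_div_of_le (by positivity) h1
      calc b k * r ^ k ≤ (1 / ((Nat.factorial k : ℝ) * 2 ^ k)) * r ^ k :=
            mul_le_mul_of_nonneg_right h2 (by positivity)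
        _ = (r/2) ^ k / (Nat.factorial k : ℝ) := by
            rw [div_pow]
            field_simp
    have hsum : Summable fun k => b k * r ^ k :=
      Summable.of_nonneg_of_le (fun k => by have := (hbpos k).le; positivity) hble
        (Real.summable_pow_div_factorial (r/2))
    have hts : ∀ n, b n * r ^ n ≤ ∑' k, b k * r ^ k := fun n =>
      Summable.le_tsum hsum n (fun i _ => mul_nonneg (hbpos i).le (by positivity))
    have hPK : Pf K ≤ ((t:ℝ) + 2) ^ K := by
      rw [hPdef]
      have hb : ∀ i ∈ Finset.range K, (mfun (i+1) : ℝ) ≤ ((t:ℝ) + 2) := by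
        intro i hi
        simp only [Finset.mem_range] at hi
        have h1 : mfun (i+1) ≤ t + 2 := hmub1 t (i+1) (by omega)
        exact_mod_cast h1
      calc (∏ i ∈ Finset.range K, (mfun (i+1) : ℝ)) ≤ ∏ _i ∈ Finset.range K, ((t:ℝ) + 2) :=
            Finset.prod_le_prod (fun i _ => by positivity) hb
        _ = ((t:ℝ) + 2) ^ K := by rw [Finset.prod_const, Finset.card_range]
    rcases le_total r 1 with hr1 | hr1
    · -- small ξ
      have hA1 : C * (1+r) ^ N₀ ≤ C * 2 ^ N₀ :=
        mul_le_mul_of_nonneg_left (pow_le_pow_left₀ (by positivity) (by linarith) N₀) hC.le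
      have hA4 : ((t:ℝ))^2 ≤ ((t:ℝ))^(2*(K+1)) / ((t:ℝ)+2)^K := by
        rw [le_div_iff₀ (by positivity)]
        calc (t:ℝ)^2 * ((t:ℝ)+2)^K ≤ (t:ℝ)^2 * ((t:ℝ)^2)^K :=
              mul_le_mul_of_nonneg_left (pow_le_pow_left₀ (by positivity) (by nlinarith) K)
                (by positivity)
          _ = ((t:ℝ))^(2*(K+1)) := by
              rw [mul_comm (2:ℕ) (K+1), pow_mul, pow_succ]
              ring
      have hA5 : ((t:ℝ))^(2*(K+1)) / ((t:ℝ)+2)^K ≤ ((t:ℝ))^(2*(K+1)) / Pf K :=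
        div_le_div_of_nonneg_left (by positivity) (hPpos K) hPK
      have hA6 : ((t:ℝ))^(2*(K+1)) / Pf K = b K * (((t:ℝ))^(2*(K+1)) * (Nat.factorial K : ℝ)^s * 1) := by
        simp only [hbdef]
        have hne1 : ((Nat.factorial K : ℝ)) ^ s ≠ 0 := by positivity
        have hne2 : Pf K ≠ 0 := (hPpos K).ne'
        field_simp
      have hA7 : b K * (((t:ℝ))^(2*(K+1)) * (Nat.factorial K : ℝ)^s * 1) <
          b K * r ^ K * ‖f ξ‖ := by
        have hrKne : (r:ℝ)^K ≠ 0 := by positivity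
        have h1 : b K * r ^ K * (((t:ℝ)) ^ (2 * (K + 1)) * ((Nat.factorial K : ℝ)) ^ s * (r ^ K)⁻¹)
            < b K * r ^ K * ‖f ξ‖ :=
          mul_lt_mul_of_pos_left hdect (mul_pos (hbpos K) (pow_pos hrpos K))
        refine lt_of_eq_of_lt ?_ h1
        field_simp
      have hA8 : b K * r ^ K * ‖f ξ‖ ≤ (∑' k, b k * r ^ k) * ‖f ξ‖ :=
        mul_le_mul_of_nonneg_right (hts K) hfpos.le
      have hA3 : (t:ℝ) ≤ (t:ℝ)^2 := by nlinarith
      linarith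
    · -- large ξ
      have hKL1 : (1:ℝ) ≤ ((K:ℝ) + (L:ℝ)) := by
        have : (1:ℝ) ≤ (K:ℝ) := by exact_mod_cast Nat.one_le_iff_ne_zero.mpr (by omega)
        have : (0:ℝ) ≤ (L:ℝ) := by positivity
        linarith
      have h_a : (((K+L).factorial : ℝ)) ^ s ≤ ((K:ℝ)+(L:ℝ)) ^ (L*S) * ((Nat.factorial K : ℝ)) ^ s := by
        have hc1 : (((K+L).factorial : ℝ)) ≤ ((K:ℝ)+(L:ℝ)) ^ L * (Nat.factorial K : ℝ) := by
          have := aux_fact K L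
          push_cast
          exact_mod_cast this
        have hc2 : ((((K+L).factorial : ℝ))) ^ s ≤ (((K:ℝ)+(L:ℝ)) ^ L * (Nat.factorial K : ℝ)) ^ s :=
          Real.rpow_le_rpow (by positivity) hc1 hs0
        have hc3 : (((K:ℝ)+(L:ℝ)) ^ L * (Nat.factorial K : ℝ)) ^ s =
            (((K:ℝ)+(L:ℝ)) ^ L) ^ s * ((Nat.factorial K : ℝ)) ^ s :=
          Real.mul_rpow (by positivity) (by positivity)
        have hc4 : (((K:ℝ)+(L:ℝ)) ^ L) ^ s ≤ ((K:ℝ)+(L:ℝ)) ^ (L*S) := by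
          rw [← Real.rpow_natCast ((K:ℝ)+(L:ℝ)) L, ← Real.rpow_mul (by positivity)]
          rw [← Real.rpow_natCast ((K:ℝ)+(L:ℝ)) (L*S)]
          apply Real.rpow_le_rpow_of_exponent_le hKL1
          push_cast
          rw [hSdef]
          exact mul_le_mul_of_nonneg_left (Nat.le_ceil s) (by positivity)
        calc (((K+L).factorial : ℝ)) ^ s ≤ (((K:ℝ)+(L:ℝ)) ^ L) ^ s * ((Nat.factorial K : ℝ)) ^ s := by
              rw [← hc3]; exact hc2
          _ ≤ ((K:ℝ)+(L:ℝ)) ^ (L*S) * ((Nat.factorial K : ℝ)) ^ s :=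
              mul_le_mul_of_nonneg_right hc4 (by positivity)
      have h_P : Pf (K+L) ≤ ((t:ℝ)+2) ^ K * ((t:ℝ)+(L:ℝ)+2) ^ L := by
        rw [hPdef, Finset.prod_range_add]
        apply mul_le_mul ?_ ?_ (by positivity) (by positivity)
        · have hb : ∀ i ∈ Finset.range K, (mfun (i+1) : ℝ) ≤ ((t:ℝ) + 2) := by
            intro i hi
            simp only [Finset.mem_range] at hi
            have h1 : mfun (i+1) ≤ t + 2 := hmub1 t (i+1) (by omega)
            exact_mod_cast h1
          calc (∏ i ∈ Finset.range K, (mfun (i+1) : ℝ)) ≤ ∏ _i ∈ Finset.range K, ((t:ℝ) + 2) :=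
                Finset.prod_le_prod (fun i _ => by positivity) hb
            _ = ((t:ℝ) + 2) ^ K := by rw [Finset.prod_const, Finset.card_range]
        · have hb : ∀ i ∈ Finset.range L, (mfun (K+i+1) : ℝ) ≤ ((t:ℝ)+(L:ℝ)+2) := by
            intro i hi
            simp only [Finset.mem_range] at hi
            have h1 : mfun (K+i+1) ≤ t + L + 2 := hmub2 t L (K+i+1) (by omega)
            have h2 : ((mfun (K+i+1) : ℕ):ℝ) ≤ ((t + L + 2 : ℕ):ℝ) := by exact_mod_cast h1
            push_cast at h2
            have hLr : ((L:ℕ):ℝ) = (N₀:ℝ) + 1 := by rw [hLdef]; push_cast; ring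
            rw [hLr]
            linarith
          calc (∏ i ∈ Finset.range L, (mfun (K+i+1) : ℝ)) ≤ ∏ _i ∈ Finset.range L, ((t:ℝ)+(L:ℝ)+2) :=
                Finset.prod_le_prod (fun i _ => by positivity) hb
            _ = ((t:ℝ)+(L:ℝ)+2) ^ L := by rw [Finset.prod_const, Finset.card_range]
      have hc : ((K:ℝ)+(L:ℝ)) ^ (L*S) < 2 ^ K := by
        have := hT₁ K (le_trans htT₁ htK.le)
        rw [one_mul] at this
        rw [hSdef]
        exact this
      have hd : C * 2 ^ N₀ * ((t:ℝ)+(L:ℝ)+2) ^ L < 2 ^ t := by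
        have := hT₂ t htT₂
        push_cast at this
        convert this using 3 <;> push_cast <;> ring
      have h2t2K : (2:ℝ) ^ t ≤ 2 ^ K := pow_le_pow_right₀ one_le_two htK.le
      have hstar : C * 2 ^ N₀ * ((((K+L).factorial : ℝ)) ^ s * Pf (K+L)) <
          ((t:ℝ)) ^ (2*(K+1)) * ((Nat.factorial K : ℝ)) ^ s := by
        have hd4 : ((t:ℝ)+2) * 4 ≤ (t:ℝ)^2 := by nlinarith
        calc C * 2 ^ N₀ * ((((K+L).factorial : ℝ)) ^ s * Pf (K+L))
            ≤ C * 2 ^ N₀ * ((((K:ℝ)+(L:ℝ)) ^ (L*S) * ((Nat.factorial K : ℝ)) ^ s) *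
              (((t:ℝ)+2) ^ K * ((t:ℝ)+(L:ℝ)+2) ^ L)) := by
              apply mul_le_mul_of_nonneg_left ?_ (by positivity)
              exact mul_le_mul h_a h_P (hPpos _).le (by positivity)
          _ = (C * 2 ^ N₀ * ((t:ℝ)+(L:ℝ)+2) ^ L) * ((K:ℝ)+(L:ℝ)) ^ (L*S) *
              (((t:ℝ)+2) ^ K * ((Nat.factorial K : ℝ)) ^ s) := by ring
          _ < ((2:ℝ) ^ t * 2 ^ K) * (((t:ℝ)+2) ^ K * ((Nat.factorial K : ℝ)) ^ s) := by
              apply mul_lt_mul_of_pos_right ?_ (by positivity)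
              exact mul_lt_mul'' hd hc (by positivity) (by positivity)
          _ ≤ ((2:ℝ) ^ K * 2 ^ K) * (((t:ℝ)+2) ^ K * ((Nat.factorial K : ℝ)) ^ s) := by
              apply mul_le_mul_of_nonneg_right ?_ (by positivity)
              exact mul_le_mul_of_nonneg_right h2t2K (by positivity)
          _ = (((t:ℝ)+2) * 4) ^ K * ((Nat.factorial K : ℝ)) ^ s := by
              rw [mul_pow]
              rw [show ((4:ℝ)) ^ K = 2 ^ K * 2 ^ K by rw [show (4:ℝ) = 2*2 by norm_num, mul_pow]]
              ring
          _ ≤ ((t:ℝ)^2) ^ K * ((Nat.factorial K : ℝ)) ^ s := by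
              apply mul_le_mul_of_nonneg_right (pow_le_pow_left₀ (by positivity) hd4 K)
                (by positivity)
          _ ≤ (((t:ℝ)^2) ^ K * (t:ℝ)^2) * ((Nat.factorial K : ℝ)) ^ s := by
              apply mul_le_mul_of_nonneg_right ?_ (by positivity)
              exact le_mul_of_one_le_right (by positivity) (by nlinarith)
          _ = ((t:ℝ)) ^ (2*(K+1)) * ((Nat.factorial K : ℝ)) ^ s := by
              rw [mul_comm (2:ℕ) (K+1), pow_mul, pow_succ]
              ring
      have hX : (0:ℝ) < (((K+L).factorial : ℝ)) ^ s * Pf (K+L) := by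
        have := hPpos (K+L)
        have := hfactge1 (K+L)
        nlinarith
      have hB : C * 2 ^ N₀ < b (K+L) * (((t:ℝ)) ^ (2*(K+1)) * ((Nat.factorial K : ℝ)) ^ s) := by
        have h1 : C * 2 ^ N₀ < (((t:ℝ)) ^ (2*(K+1)) * ((Nat.factorial K : ℝ)) ^ s) /
            ((((K+L).factorial : ℝ)) ^ s * Pf (K+L)) := (lt_div_iff₀ hX).mpr hstar
        have h2 : b (K+L) * (((t:ℝ)) ^ (2*(K+1)) * ((Nat.factorial K : ℝ)) ^ s) =
            (((t:ℝ)) ^ (2*(K+1)) * ((Nat.factorial K : ℝ)) ^ s) /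
            ((((K+L).factorial : ℝ)) ^ s * Pf (K+L)) := by
          simp only [hbdef]
          field_simp
        rw [h2]
        exact h1
      have hrKne : (r:ℝ)^K ≠ 0 := by positivity
      calc C * (1+r) ^ N₀ ≤ C * (2*r) ^ N₀ :=
            mul_le_mul_of_nonneg_left (pow_le_pow_left₀ (by positivity) (by linarith) N₀) hC.le
        _ = (C * 2 ^ N₀) * r ^ N₀ := by rw [mul_pow]; ring
        _ ≤ (C * 2 ^ N₀) * r ^ L :=
            mul_le_mul_of_nonneg_left (pow_le_pow_right₀ hr1 (by omega))
              (by positivity)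
        _ < (b (K+L) * (((t:ℝ)) ^ (2*(K+1)) * ((Nat.factorial K : ℝ)) ^ s)) * r ^ L :=
            mul_lt_mul_of_pos_right hB (by positivity)
        _ = b (K+L) * r ^ (K+L) * (((t:ℝ)) ^ (2*(K+1)) * ((Nat.factorial K : ℝ)) ^ s * (r ^ K)⁻¹) := by
            rw [pow_add]
            field_simp
            ring
        _ < b (K+L) * r ^ (K+L) * ‖f ξ‖ :=
            mul_lt_mul_of_pos_left hdect (mul_pos (hbpos (K+L)) (pow_pos hrpos (K+L)))
        _ ≤ (∑' k, b k * r ^ k) * ‖f ξ‖ :=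
            mul_le_mul_of_nonneg_right (hts (K+L)) hfpos.le
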